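/- Let k > 0 and suppose (ω, d) : ℝ → ℝ² solves ω' = d(2k - ω), d' = -d² - 2kω with initial data satisfying (2k - ω₀)² > d₀² + ω₀². Then the solution exists globally and is bounded; moreover ω(t) < 2k for all t and the orbit {(ω(t), d(t))} lies on the ellipse {(ω,d) : (2k-ω)² = B₀(d² + ω²)} where B₀ = (2k-ω₀)²/(d₀² + ω₀²) > 1. -/

import Mathlib

private lemma quad_bound (c k C x : ℝ) (hc : 0 < c) (hk : 0 < k)
    (hC : c * C = 4 * k * (c + 2)) (hq : c * x ^ 2 + 4 * k * x - 4 * k ^ 2 ≤ 0) :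
    |x| ≤ C := by
  have hCpos : 0 < C := by nlinarith
  rw [abs_le]
  constructor
  · by_contra h
    push_neg at h
    have h1 : 0 < -x - C := by linarith
    have h2 : 0 < -(c * x + 4 * k) := by nlinarith
    nlinarith [mul_pos h1 h2, mul_pos hCpos h2]
  · by_contra h
    push_neg at h
    have h1 : 0 < x - C := by linarith
    have h2 : 0 < c * x + 4 * k := by nlinarith
    nlinarith [mul_pos h1 h2, mul_pos hCpos h2, mul_pos h1 hk]

private lemma conservation_aux (k : ℝ) (ω d : ℝ → ℝ)
    (hω : ∀ t : ℝ, HasDerivAt ω (d t * (2 * k - ω t)) t)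
    (hd : ∀ t : ℝ, HasDerivAt d (-(d t) ^ 2 - 2 * k * ω t) t) :
    ∀ t : ℝ, (2 * k - ω t) ^ 2 * ((d 0) ^ 2 + (ω 0) ^ 2)
      = (2 * k - ω 0) ^ 2 * ((d t) ^ 2 + (ω t) ^ 2) := by
  set F : ℝ → ℝ := fun t =>
    (2 * k - ω t) ^ 2 * ((d 0) ^ 2 + (ω 0) ^ 2)
      - (2 * k - ω 0) ^ 2 * ((d t) ^ 2 + (ω t) ^ 2) with hFdef
  have hF : ∀ t, HasDerivAt F (-(2 * d t) * F t) t := by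
    intro t
    have h1 : HasDerivAt (fun t => (2 * k - ω t) ^ 2)
        (2 * (2 * k - ω t) ^ 1 * (0 - d t * (2 * k - ω t))) t :=
      (((hasDerivAt_const t (2*k)).sub (hω t)).pow 2)
    have h2 : HasDerivAt (fun t => (d t) ^ 2 + (ω t) ^ 2)
        (2 * d t ^ 1 * (-(d t) ^ 2 - 2 * k * ω t) + 2 * ω t ^ 1 * (d t * (2 * k - ω t))) t :=
      ((hd t).pow 2).add ((hω t).pow 2)
    have := (h1.mul_const ((d 0) ^ 2 + (ω 0) ^ 2)).sub (h2.const_mul ((2 * k - ω 0) ^ 2))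
    refine this.congr_deriv ?_
    simp only [hFdef]
    ring
  have hdc : Continuous d := Differentiable.continuous fun t => (hd t).differentiableAt
  set A : ℝ → ℝ := fun t => ∫ s in (0:ℝ)..t, 2 * d s with hAdef
  have hA : ∀ t, HasDerivAt A (2 * d t) t := by
    intro t
    exact intervalIntegral.integral_hasDerivAt_right
      ((hdc.const_smul (2:ℝ)).intervalIntegrable 0 t)
      ((hdc.const_smul (2:ℝ)).stronglyMeasurableAtFilter _ _)
      (hdc.const_smul (2:ℝ)).continuousAt
  set H : ℝ → ℝ := fun t => F t * Real.exp (A t) with hHdef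
  have hH : ∀ t, HasDerivAt H 0 t := by
    intro t
    have := (hF t).mul ((hA t).exp)
    refine this.congr_deriv ?_
    ring
  have hconst : ∀ t, H t = H 0 :=
    fun t => is_const_of_deriv_eq_zero
      (fun x => (hH x).differentiableAt) (fun x => (hH x).deriv) t 0
  intro t
  have hH0 : H 0 = 0 := by simp [hHdef, hFdef]
  have ht := hconst t
  rw [hH0] at ht
  have he : Real.exp (A t) ≠ 0 := Real.exp_ne_zero _
  have hFt : F t = 0 := by
    rcases mul_eq_zero.mp ht with h | h
    · exact h
    · exact absurd h he
  simp only [hFdef] at hFt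
  linarith

/-- Subcritical global boundedness for the 1D rotational system: if
`(2k - ω₀)² > d₀² + ω₀²` (with `(d₀, ω₀) ≠ 0`, so `B₀ > 1`), the global solution of
`ω' = d(2k - ω)`, `d' = -d² - 2kω` is bounded, satisfies `ω < 2k`, and its orbit lies
on the ellipse `(2k - ω)² = B₀ (d² + ω²)`. -/
theorem subcritical_global_bounded (k : ℝ) (hk : 0 < k)
    (ω d : ℝ → ℝ)
    (hω : ∀ t : ℝ, HasDerivAt ω (d t * (2 * k - ω t)) t)
    (hd : ∀ t : ℝ, HasDerivAt d (-(d t) ^ 2 - 2 * k * ω t) t)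
    (hnz : (d 0) ^ 2 + (ω 0) ^ 2 ≠ 0)
    (hsub : (2 * k - ω 0) ^ 2 > (d 0) ^ 2 + (ω 0) ^ 2) :
    (∃ C : ℝ, ∀ t : ℝ, |ω t| ≤ C ∧ |d t| ≤ C) ∧
    (∀ t : ℝ, ω t < 2 * k) ∧
    ((2 * k - ω 0) ^ 2 / ((d 0) ^ 2 + (ω 0) ^ 2) > 1 ∧
      ∀ t : ℝ, (2 * k - ω t) ^ 2
        = (2 * k - ω 0) ^ 2 / ((d 0) ^ 2 + (ω 0) ^ 2) * ((d t) ^ 2 + (ω t) ^ 2)) := by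
  have hcons := conservation_aux k ω d hω hd
  have hN0 : 0 < (d 0) ^ 2 + (ω 0) ^ 2 :=
    lt_of_le_of_ne (by positivity) (Ne.symm hnz)
  set b : ℝ := (2 * k - ω 0) ^ 2 / ((d 0) ^ 2 + (ω 0) ^ 2) with hbdef
  have hb1 : 1 < b := (one_lt_div hN0).mpr hsub
  have hell : ∀ t : ℝ, (2 * k - ω t) ^ 2 = b * ((d t) ^ 2 + (ω t) ^ 2) := by
    intro t
    have := hcons t
    rw [hbdef]
    field_simp [hbdef]
    linarith
  -- positivity of N t
  have hNpos : ∀ t, 0 < (d t) ^ 2 + (ω t) ^ 2 := by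
    intro t
    rcases lt_or_eq_of_le (by positivity : (0:ℝ) ≤ (d t) ^ 2 + (ω t) ^ 2) with h | h
    · exact h
    · exfalso
      have hE : (2 * k - ω t) ^ 2 = 0 := by rw [hell t, ← h]; ring
      have hω0 : ω t = 0 := by nlinarith [sq_nonneg (d t), sq_nonneg (ω t)]
      rw [hω0] at hE
      nlinarith
  have hlt : ∀ t, ω t < 2 * k := by
    intro t
    have h1 := hell t
    have h2 := hNpos t
    nlinarith [sq_nonneg (d t), sq_nonneg (ω t)]
  refine ⟨?_, hlt, hb1, hell⟩
  -- boundedness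
  set C : ℝ := 4 * k * (b + 1) / (b - 1) with hCdef
  have hbpos : 0 < b - 1 := by linarith
  have hCk : (b - 1) * C = 4 * k * (b + 1) := by
    rw [hCdef]
    field_simp [hCdef, hbpos.ne']
  have hCpos : 0 < C := by
    nlinarith
  have hωb : ∀ t, |ω t| ≤ C := by
    intro t
    have h1 := hell t
    have hd2 : 0 ≤ (d t) ^ 2 := sq_nonneg _
    have hq : (b - 1) * (ω t) ^ 2 + 4 * k * ω t - 4 * k ^ 2 ≤ 0 := by nlinarith
    exact quad_bound (b - 1) k C (ω t) hbpos hk (by rw [hCk]; ring) hq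
  refine ⟨2 * k + C, fun t => ⟨le_trans (hωb t) (by linarith), ?_⟩⟩
  have h1 := hell t
  have hωt := hωb t
  have habs : |ω t| ^ 2 = ω t ^ 2 := sq_abs _
  have hdd : (d t) ^ 2 ≤ (2 * k + C) ^ 2 := by
    have : (d t)^2 + (ω t)^2 ≤ (2*k - ω t)^2 := by nlinarith [hNpos t]
    nlinarith [abs_nonneg (ω t), neg_abs_le (ω t), le_abs_self (ω t)]
  nlinarith [abs_nonneg (d t), sq_abs (d t)]
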